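/- Let 1 ≤ ň < N, n̂ := N − ň, and x̌ ∈ X^ň. For a gamble f on X^n̂ let I_{E_x̌}f denote the gamble on X^N = X^ň × X^n̂ mapping (z, y) to f(y) if z = x̌ and to 0 otherwise, and set D⌋x̌ := {f ∈ G(X^n̂) : I_{E_x̌}f ∈ D}. If D is a coherent and exchangeable set of gambles on X^N, then D⌋x̌ is a coherent and exchangeable set of gambles on X^n̂. -/
import Mathlib


variable {X : Type*} [Fintype X] [DecidableEq X] [Nonempty X]

/-- `ex^n(f)`: the uniform average of all permuted versions `π^t f` of `f`,
where `(π^t f)(x) = f(x ∘ π)`. -/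
noncomputable def exg {X : Type*} (n : ℕ) (f : (Fin n → X) → ℝ) : (Fin n → X) → ℝ :=
  fun x => (∑ π : Equiv.Perm (Fin n), f (x ∘ π)) / (n.factorial : ℝ)

/-- `W_{A_n}`: the linear span of the gambles `f - π^t f`, which is the kernel of
the projection operator `ex^n`. -/
def WA (X : Type*) (n : ℕ) : Set ((Fin n → X) → ℝ) := {f | exg n f = 0}

/-- A coherent set of desirable gambles on a set of possibilities `Y`. -/
def Coherent {Y : Type*} (D : Set (Y → ℝ)) : Prop :=
  (0 : Y → ℝ) ∉ D ∧ (∀ f : Y → ℝ, 0 ≤ f → f ≠ 0 → f ∈ D) ∧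
  (∀ f ∈ D, ∀ c : ℝ, 0 < c → c • f ∈ D) ∧ ∀ f ∈ D, ∀ g ∈ D, f + g ∈ D

/-- A set of desirable gambles on `X^n` is exchangeable if `W_{A_n} + D ⊆ D`. -/
def Exchangeable (X : Type*) (n : ℕ) (D : Set ((Fin n → X) → ℝ)) : Prop :=
  ∀ f ∈ WA X n, ∀ g ∈ D, f + g ∈ D

/-- The first `nc` coordinates of a sequence in `X^(nc + nh)`. -/
def firstPart {X : Type*} {nc nh : ℕ} (w : Fin (nc + nh) → X) : Fin nc → X :=
  fun i => w (Fin.castAdd nh i)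

/-- The last `nh` coordinates of a sequence in `X^(nc + nh)`. -/
def lastPart {X : Type*} {nc nh : ℕ} (w : Fin (nc + nh) → X) : Fin nh → X :=
  fun j => w (Fin.natAdd nc j)

/-- `I_{E_x̌} f`: the gamble on `X^(nc+nh)` equal to `f` on the last `nh` coordinates
when the first `nc` coordinates coincide with `x̌`, and `0` otherwise. -/
def IEx {X : Type*} [Fintype X] [DecidableEq X] {nc nh : ℕ} (xc : Fin nc → X)
    (f : (Fin nh → X) → ℝ) : (Fin (nc + nh) → X) → ℝ :=
  fun w => if firstPart w = xc then f (lastPart w) else 0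

section Aux
variable {X : Type*} [Fintype X] [DecidableEq X]

def iotaPerm {nc nh : ℕ} (β : Equiv.Perm (Fin nh)) : Equiv.Perm (Fin (nc + nh)) :=
  finSumFinEquiv.permCongr (Equiv.sumCongr (Equiv.refl (Fin nc)) β)

lemma iotaPerm_castAdd {nc nh : ℕ} (β : Equiv.Perm (Fin nh)) (i : Fin nc) :
    iotaPerm (nc := nc) β (Fin.castAdd nh i) = Fin.castAdd nh i := by
  simp [iotaPerm, Equiv.permCongr_apply, finSumFinEquiv_symm_apply_castAdd,
    ← finSumFinEquiv_apply_left]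

lemma iotaPerm_natAdd {nc nh : ℕ} (β : Equiv.Perm (Fin nh)) (j : Fin nh) :
    iotaPerm (nc := nc) β (Fin.natAdd nc j) = Fin.natAdd nc (β j) := by
  simp [iotaPerm, Equiv.permCongr_apply, finSumFinEquiv_symm_apply_natAdd,
    ← finSumFinEquiv_apply_right]

lemma firstPart_comp {nc nh : ℕ} (x : Fin (nc + nh) → X) (π : Equiv.Perm (Fin (nc + nh)))
    (β : Equiv.Perm (Fin nh)) :
    firstPart (x ∘ ⇑(π * iotaPerm (nc := nc) β)) = firstPart (x ∘ ⇑π) := by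
  funext i
  simp [firstPart, iotaPerm_castAdd]

lemma lastPart_comp {nc nh : ℕ} (x : Fin (nc + nh) → X) (π : Equiv.Perm (Fin (nc + nh)))
    (β : Equiv.Perm (Fin nh)) :
    lastPart (x ∘ ⇑(π * iotaPerm (nc := nc) β)) = lastPart (x ∘ ⇑π) ∘ ⇑β := by
  funext j
  simp [lastPart, iotaPerm_natAdd]

lemma IEx_add {nc nh : ℕ} (xc : Fin nc → X) (f g : (Fin nh → X) → ℝ) :
    IEx xc (f + g) = IEx xc f + IEx xc g := by
  funext w
  simp only [IEx, Pi.add_apply]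
  split <;> simp

lemma IEx_smul {nc nh : ℕ} (xc : Fin nc → X) (c : ℝ) (f : (Fin nh → X) → ℝ) :
    IEx xc (c • f) = c • IEx xc f := by
  funext w
  simp only [IEx, Pi.smul_apply, smul_eq_mul]
  split <;> simp

lemma IEx_zero {nc nh : ℕ} (xc : Fin nc → X) :
    IEx xc (0 : (Fin nh → X) → ℝ) = 0 := by
  funext w; simp [IEx]

lemma sum_perm_IEx_eq_zero {nc nh : ℕ} (xc : Fin nc → X) {f : (Fin nh → X) → ℝ}
    (hf : ∀ y : Fin nh → X, ∑ β : Equiv.Perm (Fin nh), f (y ∘ ⇑β) = 0)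
    (x : Fin (nc + nh) → X) :
    ∑ π : Equiv.Perm (Fin (nc + nh)), IEx xc f (x ∘ ⇑π) = 0 := by
  have h1 : ∀ β : Equiv.Perm (Fin nh),
      ∑ π : Equiv.Perm (Fin (nc + nh)), IEx xc f (x ∘ ⇑(π * iotaPerm (nc := nc) β))
      = ∑ π : Equiv.Perm (Fin (nc + nh)), IEx xc f (x ∘ ⇑π) := fun β =>
    Fintype.sum_equiv (Equiv.mulRight (iotaPerm (nc := nc) β)) _ _ (fun π => rfl)
  have h2 : ∑ β : Equiv.Perm (Fin nh), ∑ π : Equiv.Perm (Fin (nc + nh)),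
      IEx xc f (x ∘ ⇑(π * iotaPerm (nc := nc) β)) = 0 := by
    rw [Finset.sum_comm]
    refine Finset.sum_eq_zero fun π _ => ?_
    have : ∀ β : Equiv.Perm (Fin nh), IEx xc f (x ∘ ⇑(π * iotaPerm (nc := nc) β))
        = if firstPart (x ∘ ⇑π) = xc then f ((lastPart (x ∘ ⇑π)) ∘ ⇑β) else 0 := by
      intro β
      simp only [IEx]
      rw [firstPart_comp, lastPart_comp]
    simp only [this]
    split
    · exact hf _
    · simp
  have h3 : ∑ β : Equiv.Perm (Fin nh), ∑ π : Equiv.Perm (Fin (nc + nh)),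
      IEx xc f (x ∘ ⇑(π * iotaPerm (nc := nc) β))
      = (Fintype.card (Equiv.Perm (Fin nh))) •
        ∑ π : Equiv.Perm (Fin (nc + nh)), IEx xc f (x ∘ ⇑π) := by
    rw [Finset.sum_congr rfl fun β _ => h1 β, Finset.sum_const, Finset.card_univ]
  rw [h3] at h2
  have hc : (Fintype.card (Equiv.Perm (Fin nh))) ≠ 0 := Fintype.card_ne_zero
  exact (smul_eq_zero.mp h2).resolve_left hc

lemma IEx_mem_WA {nc nh : ℕ} (xc : Fin nc → X) {f : (Fin nh → X) → ℝ}
    (hf : f ∈ WA X nh) : IEx xc f ∈ WA X (nc + nh) := by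
  have hsum : ∀ y : Fin nh → X, ∑ β : Equiv.Perm (Fin nh), f (y ∘ ⇑β) = 0 := by
    intro y
    have := congrFun hf y
    simp only [exg, Pi.zero_apply, div_eq_zero_iff] at this
    rcases this with h | h
    · exact h
    · exact absurd h (Nat.cast_ne_zero.mpr (Nat.factorial_ne_zero nh))
  funext x
  simp only [exg, Pi.zero_apply, sum_perm_IEx_eq_zero xc hsum x, zero_div]

end Aux

theorem updating_preserves_exchangeability {nc nh : ℕ} (hnc : 1 ≤ nc) (hnh : 1 ≤ nh)
    (xc : Fin nc → X) (D : Set ((Fin (nc + nh) → X) → ℝ))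
    (hcoh : Coherent D) (hexch : Exchangeable X (nc + nh) D) :
    Coherent {f : (Fin nh → X) → ℝ | IEx xc f ∈ D} ∧
    Exchangeable X nh {f : (Fin nh → X) → ℝ | IEx xc f ∈ D} := by
  constructor
  · refine ⟨?_, ?_, ?_, ?_⟩
    · intro h0
      simp only [Set.mem_setOf_eq, IEx_zero] at h0
      exact hcoh.1 h0
    · intro f hf hfne
      refine hcoh.2.1 _ ?_ ?_
      · intro w
        simp only [IEx, Pi.zero_apply]
        split
        · exact hf _
        · exact le_refl _
      · obtain ⟨y, hy⟩ := Function.ne_iff.mp hfne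
        intro hz
        apply hy
        have := congrFun hz (Fin.append xc y)
        simp only [IEx, Pi.zero_apply] at this
        have hfp : firstPart (Fin.append xc y) = xc := by
          funext i; simp [firstPart, Fin.append_left]
        have hlp : lastPart (Fin.append xc y) = y := by
          funext j; simp [lastPart, Fin.append_right]
        rw [hfp, hlp, if_pos rfl] at this
        exact this
    · intro f hf c hc
      simp only [Set.mem_setOf_eq, IEx_smul]
      exact hcoh.2.2.1 _ hf c hc
    · intro f hf g hg
      simp only [Set.mem_setOf_eq, IEx_add]
      exact hcoh.2.2.2 _ hf _ hg
  · intro f hf g hg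
    simp only [Set.mem_setOf_eq, IEx_add]
    exact hexch _ (IEx_mem_WA xc hf) _ hg
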